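/- Let C = ΦΦᵀ + αI where Φ ∈ R^{d×n} has at most n columns, α > 0, θ ∈ R^d with ‖θ‖₂ ≤ 1, and let Y = Φ(Φᵀθ + b) for some vector b ∈ R^n with ‖b‖_∞ ≤ δ. Then for any x ∈ R^d with xᵀC⁻¹x ≤ 1, |xᵀC⁻¹Y − xᵀθ| ≤ √n·δ + √α. -/

import Mathlib

open Matrix

-- symmetric dot product helper
lemma symm_dot {d : ℕ} {M : Matrix (Fin d) (Fin d) ℝ} (hM : Mᵀ = M)
    (u w : Fin d → ℝ) : u ⬝ᵥ M *ᵥ w = (M *ᵥ u) ⬝ᵥ w := by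
  rw [dotProduct_mulVec, ← vecMul_transpose, hM]

-- Cauchy-Schwarz for a PSD matrix
open scoped MatrixOrder in
lemma psd_cs {d : ℕ} {M : Matrix (Fin d) (Fin d) ℝ} (hM : M.PosSemidef)
    (u w : Fin d → ℝ) : (u ⬝ᵥ M *ᵥ w) ^ 2 ≤ (u ⬝ᵥ M *ᵥ u) * (w ⬝ᵥ M *ᵥ w) := by
  have hS : CFC.sqrt M * CFC.sqrt M = M := CFC.sqrt_mul_sqrt_self M hM.nonneg
  have hSh : (CFC.sqrt M)ᵀ = CFC.sqrt M := by
    have := (CFC.sqrt_nonneg M).posSemidef.isHermitian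
    rwa [Matrix.IsHermitian, conjTranspose_eq_transpose_of_trivial] at this
  have key : ∀ a c : Fin d → ℝ, a ⬝ᵥ M *ᵥ c = (CFC.sqrt M *ᵥ a) ⬝ᵥ (CFC.sqrt M *ᵥ c) := by
    intro a c
    have h2 : a ⬝ᵥ (CFC.sqrt M * CFC.sqrt M) *ᵥ c = (CFC.sqrt M *ᵥ a) ⬝ᵥ (CFC.sqrt M *ᵥ c) := by
      rw [← mulVec_mulVec, symm_dot hSh]
    rwa [hS] at h2
  rw [key, key u u, key w w]
  have := Finset.sum_mul_sq_le_sq_mul_sq Finset.univ (CFC.sqrt M *ᵥ u) (CFC.sqrt M *ᵥ w)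
  simpa [dotProduct, pow_two, mul_comm] using this

theorem stmt_7 {d n : ℕ} (Φ : Matrix (Fin d) (Fin n) ℝ)
    (α : ℝ) (hα : 0 < α)
    (C : Matrix (Fin d) (Fin d) ℝ)
    (hC : C = Φ * Φᵀ + α • (1 : Matrix (Fin d) (Fin d) ℝ))
    (θ : Fin d → ℝ) (hθ : ∑ i, (θ i) ^ 2 ≤ 1)
    (b : Fin n → ℝ) (δ : ℝ) (hb : ∀ i, |b i| ≤ δ)
    (Y : Fin d → ℝ) (hY : Y = Φ.mulVec (Φᵀ.mulVec θ + b))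
    (x : Fin d → ℝ) (hx : x ⬝ᵥ C⁻¹.mulVec x ≤ 1) :
    |x ⬝ᵥ C⁻¹.mulVec Y - x ⬝ᵥ θ| ≤ Real.sqrt n * δ + Real.sqrt α := by
  have hΦΦ : (Φ * Φᵀ).PosSemidef := by
    have := posSemidef_self_mul_conjTranspose Φ
    rwa [conjTranspose_eq_transpose_of_trivial] at this
  have h1 : (α • (1 : Matrix (Fin d) (Fin d) ℝ)).PosDef := by
    refine Matrix.PosDef.of_dotProduct_mulVec_pos ?_ ?_
    · unfold Matrix.IsHermitian
      rw [conjTranspose_eq_transpose_of_trivial]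
      simp [Matrix.transpose_smul]
    · intro v hv
      have hvv : 0 < v ⬝ᵥ v := by
        obtain ⟨i, hi⟩ := Function.ne_iff.mp hv
        have : 0 < ∑ j, v j * v j :=
          Finset.sum_pos' (fun j _ => mul_self_nonneg _)
            ⟨i, Finset.mem_univ i, mul_self_pos.mpr hi⟩
        simpa [dotProduct] using this
      simp only [smul_mulVec, one_mulVec, dotProduct_smul, smul_eq_mul]
      have : star v = v := by simp
      rw [this]
      exact mul_pos hα hvv
  have hCpd : C.PosDef := hC ▸ Matrix.PosDef.posSemidef_add hΦΦ h1
  set A := C⁻¹ with hA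
  have hApd : A.PosDef := hCpd.inv
  have hAC : A * C = 1 := nonsing_inv_mul C (isUnit_iff_isUnit_det C |>.mp hCpd.isUnit)
  have hCA : C * A = 1 := mul_nonsing_inv C (isUnit_iff_isUnit_det C |>.mp hCpd.isUnit)
  have hAsym : Aᵀ = A := by
    have := hApd.isHermitian
    rwa [Matrix.IsHermitian, conjTranspose_eq_transpose_of_trivial] at this
  set w := A *ᵥ x with hw
  set v := Φᵀ *ᵥ w with hv
  -- key identity
  have hΦΦC : Φ * Φᵀ = C - α • (1 : Matrix (Fin d) (Fin d) ℝ) := by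
    rw [hC]; abel
  have key : x ⬝ᵥ A *ᵥ Y - x ⬝ᵥ θ = v ⬝ᵥ b - α * (x ⬝ᵥ A *ᵥ θ) := by
    have hYA : x ⬝ᵥ A *ᵥ Y = w ⬝ᵥ Y := symm_dot hAsym x Y
    have hwb : w ⬝ᵥ (Φ *ᵥ b) = v ⬝ᵥ b := by
      rw [dotProduct_mulVec, ← mulVec_transpose]
    have hwCθ : w ⬝ᵥ (C *ᵥ θ) = x ⬝ᵥ θ := by
      rw [hw, ← symm_dot hAsym x (C *ᵥ θ), mulVec_mulVec, hAC, one_mulVec]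
    have hwθ : w ⬝ᵥ θ = x ⬝ᵥ A *ᵥ θ := (symm_dot hAsym x θ).symm
    rw [hYA, hY, mulVec_add, dotProduct_add, hwb, mulVec_mulVec, hΦΦC,
      sub_mulVec, dotProduct_sub, hwCθ, smul_mulVec, one_mulVec,
      dotProduct_smul, smul_eq_mul, hwθ]
    ring
  rw [key]
  -- bound on θ ⬝ A θ
  set t := θ ⬝ᵥ A *ᵥ θ with ht
  have htnn : 0 ≤ t := by simpa using hApd.posSemidef.dotProduct_mulVec_nonneg θ
  set u := A *ᵥ θ with hu
  have hquad : t = (Φᵀ *ᵥ u) ⬝ᵥ (Φᵀ *ᵥ u) + α * (u ⬝ᵥ u) := by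
    have h2 : t = u ⬝ᵥ (C *ᵥ u) := by
      rw [ht, hu, ← symm_dot hAsym θ (C *ᵥ u), mulVec_mulVec, hAC, one_mulVec,
        symm_dot hAsym]
    rw [h2]
    nth_rewrite 1 [hC]
    rw [add_mulVec, dotProduct_add, ← mulVec_mulVec, dotProduct_mulVec,
      ← mulVec_transpose, smul_mulVec, one_mulVec, dotProduct_smul,
      smul_eq_mul]
  have huu : 0 ≤ u ⬝ᵥ u := by
    simp only [dotProduct]
    exact Finset.sum_nonneg fun i _ => mul_self_nonneg _
  have hαuu : α * (u ⬝ᵥ u) ≤ t := by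
    have : 0 ≤ (Φᵀ *ᵥ u) ⬝ᵥ (Φᵀ *ᵥ u) := by
      simp only [dotProduct]
      exact Finset.sum_nonneg fun i _ => mul_self_nonneg _
    linarith [hquad]
  have hcsθu : (θ ⬝ᵥ u) ^ 2 ≤ (∑ i, (θ i) ^ 2) * (u ⬝ᵥ u) := by
    have := Finset.sum_mul_sq_le_sq_mul_sq Finset.univ θ u
    simpa [dotProduct, pow_two] using this
  have htu : θ ⬝ᵥ u = t := rfl
  have htle : t ≤ 1 / α := by
    rw [htu] at hcsθu
    have hS : (∑ i, (θ i) ^ 2) * (u ⬝ᵥ u) ≤ u ⬝ᵥ u := mul_le_of_le_one_left huu hθ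
    have ht2 : α * t ^ 2 ≤ t := by
      calc α * t ^ 2 ≤ α * (u ⬝ᵥ u) := by
            apply mul_le_mul_of_nonneg_left _ hα.le
            exact le_trans hcsθu hS
        _ ≤ t := hαuu
    rw [le_div_iff₀ hα]
    nlinarith [ht2, htnn]
  -- x ⬝ A x bounds
  have hxAx : 0 ≤ x ⬝ᵥ A *ᵥ x := by simpa using hApd.posSemidef.dotProduct_mulVec_nonneg x
  -- second term bound
  have hcs2 : (x ⬝ᵥ A *ᵥ θ) ^ 2 ≤ 1 / α := by
    calc (x ⬝ᵥ A *ᵥ θ) ^ 2 ≤ (x ⬝ᵥ A *ᵥ x) * t := psd_cs hApd.posSemidef x θ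
      _ ≤ 1 * (1 / α) := by
          apply mul_le_mul hx htle htnn (by linarith)
      _ = 1 / α := one_mul _
  have hterm2 : α * |x ⬝ᵥ A *ᵥ θ| ≤ Real.sqrt α := by
    have h3 : |x ⬝ᵥ A *ᵥ θ| ≤ Real.sqrt (1 / α) := by
      rw [← Real.sqrt_sq_eq_abs]
      exact Real.sqrt_le_sqrt hcs2
    have h4 : Real.sqrt (1 / α) = 1 / Real.sqrt α := by
      rw [one_div, Real.sqrt_inv, one_div]
    have h5 : α * (1 / Real.sqrt α) = Real.sqrt α := by
      rw [mul_one_div]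
      exact Real.div_sqrt
    calc α * |x ⬝ᵥ A *ᵥ θ| ≤ α * (1 / Real.sqrt α) := by
          apply mul_le_mul_of_nonneg_left _ hα.le
          rw [← h4]; exact h3
      _ = Real.sqrt α := h5
  -- first term bound
  have hterm1 : |v ⬝ᵥ b| ≤ Real.sqrt n * δ := by
    rcases Nat.eq_zero_or_pos n with hn | hn
    · subst hn
      simp [dotProduct]
    · have hδ : 0 ≤ δ := le_trans (abs_nonneg _) (hb ⟨0, hn⟩)
      -- v ⬝ v ≤ 1
      have hww : 0 ≤ w ⬝ᵥ w := by
        simp only [dotProduct]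
        exact Finset.sum_nonneg fun i _ => mul_self_nonneg _
      have hvvid : v ⬝ᵥ v + α * (w ⬝ᵥ w) = x ⬝ᵥ A *ᵥ x := by
        have h6 : w ⬝ᵥ (C *ᵥ w) = x ⬝ᵥ A *ᵥ x := by
          rw [hw, ← symm_dot hAsym x (C *ᵥ (A *ᵥ x)), mulVec_mulVec, hAC, one_mulVec]
        have h7 : w ⬝ᵥ (C *ᵥ w) = v ⬝ᵥ v + α * (w ⬝ᵥ w) := by
          nth_rewrite 1 [hC]
          rw [add_mulVec, dotProduct_add, ← mulVec_mulVec, dotProduct_mulVec,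
            ← mulVec_transpose, smul_mulVec, one_mulVec, dotProduct_smul,
            smul_eq_mul, hv]
        rw [← h7, h6]
      have hvv1 : v ⬝ᵥ v ≤ 1 := by nlinarith [hww, hx, hvvid]
      have habs : |v ⬝ᵥ b| ≤ (∑ i, |v i|) * δ := by
        calc |v ⬝ᵥ b| ≤ ∑ i, |v i * b i| := by
              simpa [dotProduct] using Finset.abs_sum_le_sum_abs (fun i => v i * b i) Finset.univ
          _ ≤ ∑ i, |v i| * δ := by
              apply Finset.sum_le_sum
              intro i _
              rw [abs_mul]
              exact mul_le_mul_of_nonneg_left (hb i) (abs_nonneg _)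
          _ = (∑ i, |v i|) * δ := by rw [Finset.sum_mul]
      have hsumv : (∑ i, |v i|) ≤ Real.sqrt n := by
        have := Finset.sum_mul_sq_le_sq_mul_sq Finset.univ (fun _ : Fin n => (1:ℝ)) (fun i => |v i|)
        have h8 : (∑ i, |v i|) ^ 2 ≤ (n : ℝ) * (v ⬝ᵥ v) := by
          simpa [dotProduct, sq_abs, pow_two] using this
        have h9 : (∑ i, |v i|) ^ 2 ≤ (n : ℝ) := by
          calc (∑ i, |v i|) ^ 2 ≤ (n : ℝ) * (v ⬝ᵥ v) := h8
            _ ≤ (n : ℝ) * 1 := mul_le_mul_of_nonneg_left hvv1 (Nat.cast_nonneg n)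
            _ = n := mul_one _
        have h10 := Real.sqrt_le_sqrt h9
        rwa [Real.sqrt_sq (Finset.sum_nonneg fun i _ => abs_nonneg _)] at h10
      calc |v ⬝ᵥ b| ≤ (∑ i, |v i|) * δ := habs
        _ ≤ Real.sqrt n * δ := mul_le_mul_of_nonneg_right hsumv hδ
  calc |v ⬝ᵥ b - α * (x ⬝ᵥ A *ᵥ θ)| ≤ |v ⬝ᵥ b| + |α * (x ⬝ᵥ A *ᵥ θ)| := abs_sub _ _
    _ = |v ⬝ᵥ b| + α * |x ⬝ᵥ A *ᵥ θ| := by rw [abs_mul, abs_of_pos hα]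
    _ ≤ Real.sqrt n * δ + Real.sqrt α := add_le_add hterm1 hterm2
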